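/- Let A be a connected subset of a metric space M, let 𝒢 be a collection of open subsets of M covering A, and let x, y ∈ A. Then there exist finitely many members G₁, …, Gₙ of 𝒢 such that x ∈ G₁, y ∈ Gₙ, and for all 1 ≤ i, j ≤ n, Gᵢ ∩ Gⱼ ≠ ∅ if and only if |i − j| ≤ 1. -/
import Mathlib


open Set

/-- Shortening lemma: if a chain has a nonconsecutive intersection, it can be shortened. -/
lemma stmt17_shorten {M : Type*} (𝒢 : Set (Set M)) (x : M)
    (n : ℕ) (c : ℕ → Set M)
    (hmem : ∀ i, 1 ≤ i → i ≤ n → c i ∈ 𝒢) (hx : x ∈ c 1)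
    (hcons : ∀ i, 1 ≤ i → i < n → (c i ∩ c (i+1)).Nonempty)
    (i j : ℕ) (hi : 1 ≤ i) (hj : j ≤ n) (hij : i + 1 < j)
    (hne : (c i ∩ c j).Nonempty) :
    ∃ (m : ℕ) (c' : ℕ → Set M), m < n ∧ 1 ≤ m ∧ (∀ k, 1 ≤ k → k ≤ m → c' k ∈ 𝒢) ∧
      x ∈ c' 1 ∧ c' m = c n ∧ ∀ k, 1 ≤ k → k < m → (c' k ∩ c' (k+1)).Nonempty := by
  refine ⟨n - (j - i - 1), fun k => if k ≤ i then c k else c (k + (j - i - 1)),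
    by omega, by omega, ?_, ?_, ?_, ?_⟩
  · intro k hk1 hkm
    by_cases h : k ≤ i
    · simpa [h] using hmem k hk1 (by omega)
    · simpa [h] using hmem (k + (j - i - 1)) (by omega) (by omega)
  · simpa [hi] using hx
  · dsimp only
    rw [if_neg (by omega)]
    have e : n - (j - i - 1) + (j - i - 1) = n := by omega
    rw [e]
  · intro k hk1 hkm
    dsimp only
    rcases lt_trichotomy k i with h | h | h
    · rw [if_pos (by omega), if_pos (by omega)]
      exact hcons k hk1 (by omega)
    · rw [if_pos (le_of_eq h), if_neg (by omega)]
      rw [h]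
      have e : i + 1 + (j - i - 1) = j := by omega
      rw [e]; exact hne
    · rw [if_neg (by omega), if_neg (by omega)]
      have e : k + 1 + (j - i - 1) = k + (j - i - 1) + 1 := by omega
      rw [e]
      exact hcons (k + (j - i - 1)) (by omega) (by omega)

/-- chains in open covers of connected sets: if 𝒢 is an open cover of a
connected set A in a metric space and x, y ∈ A, then there are finitely many members
G₁, …, Gₙ of 𝒢 with x ∈ G₁, y ∈ Gₙ and Gᵢ ∩ Gⱼ ≠ ∅ if and only if |i − j| ≤ 1. -/
theorem stmt17 {M : Type*} [MetricSpace M] {A : Set M} (hA : IsConnected A)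
    (𝒢 : Set (Set M)) (hopen : ∀ G ∈ 𝒢, IsOpen G) (hcover : A ⊆ ⋃₀ 𝒢)
    {x y : M} (hx : x ∈ A) (hy : y ∈ A) :
    ∃ (n : ℕ) (c : ℕ → Set M), 1 ≤ n ∧
      (∀ i : ℕ, 1 ≤ i → i ≤ n → c i ∈ 𝒢) ∧
      x ∈ c 1 ∧ y ∈ c n ∧
      (∀ i j : ℕ, 1 ≤ i → i ≤ n → 1 ≤ j → j ≤ n →
        ((c i ∩ c j).Nonempty ↔ |(i : ℤ) - (j : ℤ)| ≤ 1)) := by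
  classical
  set Chn : ℕ → (ℕ → Set M) → Prop := fun n c =>
    1 ≤ n ∧ (∀ i, 1 ≤ i → i ≤ n → c i ∈ 𝒢) ∧ x ∈ c 1 ∧
    (∀ i, 1 ≤ i → i < n → (c i ∩ c (i+1)).Nonempty) with hChn
  -- Step 1: some chain reaches y
  have step1 : ∃ n c, Chn n c ∧ y ∈ c n := by
    obtain ⟨G₀, hG₀, hxG₀⟩ := hcover hx
    set E : Set (Set M) := {G | G ∈ 𝒢 ∧ ∃ n c, Chn n c ∧ c n = G} with hE
    have hG₀E : G₀ ∈ E := by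
      refine ⟨hG₀, 1, fun _ => G₀, ⟨le_rfl, fun i h1 h2 => hG₀, hxG₀,
        fun i h1 h2 => absurd (lt_of_le_of_lt h1 h2) (lt_irrefl 1)⟩, rfl⟩
    -- extension: a set of 𝒢 meeting a chain endpoint is itself a chain endpoint
    have hext : ∀ G ∈ E, ∀ G' ∈ 𝒢, (G ∩ G').Nonempty → G' ∈ E := by
      rintro G ⟨hG𝒢, n, c, ⟨hn1, hmem, hxc, hcons⟩, hcn⟩ G' hG' hGG'
      refine ⟨hG', n + 1, fun k => if k ≤ n then c k else G', ⟨by omega, ?_, ?_, ?_⟩, ?_⟩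
      · intro k hk1 hk2
        by_cases h : k ≤ n
        · simpa [h] using hmem k hk1 h
        · simpa [h] using hG'
      · simpa [hn1] using hxc
      · intro k hk1 hk2
        dsimp only
        rcases lt_or_ge k n with h | h
        · rw [if_pos (by omega), if_pos (by omega)]
          exact hcons k hk1 h
        · have hkn : k = n := by omega
          subst hkn
          rw [if_pos le_rfl, if_neg (by omega), hcn]
          exact hGG'
      · dsimp only
        rw [if_neg (by omega)]
    set U : Set M := ⋃₀ E with hU
    set V : Set M := ⋃₀ (𝒢 \ E) with hV
    have hUo : IsOpen U := isOpen_sUnion fun G hG => hopen G hG.1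
    have hVo : IsOpen V := isOpen_sUnion fun G hG => hopen G hG.1
    have hAUV : A ⊆ U ∪ V := by
      intro z hz
      obtain ⟨G, hG, hzG⟩ := hcover hz
      by_cases h : G ∈ E
      · exact Or.inl ⟨G, h, hzG⟩
      · exact Or.inr ⟨G, ⟨hG, h⟩, hzG⟩
    have hUV : U ∩ V = ∅ := by
      ext z
      simp only [Set.mem_inter_iff, Set.mem_empty_iff_false, iff_false, not_and]
      rintro ⟨G, hGE, hzG⟩ ⟨G', hG', hzG'⟩
      exact hG'.2 (hext G hGE G' hG'.1 ⟨z, hzG, hzG'⟩)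
    have hyU : y ∈ U := by
      rcases hAUV hy with h | h
      · exact h
      · exfalso
        have := hA.2 U V hUo hVo hAUV ⟨x, hx, ⟨G₀, hG₀E, hxG₀⟩⟩ ⟨y, hy, h⟩
        obtain ⟨z, _, hz⟩ := this
        rw [hUV] at hz
        exact hz
    obtain ⟨G, ⟨hG𝒢, n, c, hc, hcn⟩, hyG⟩ := hyU
    exact ⟨n, c, hc, by rw [hcn]; exact hyG⟩
  -- Step 2: take a minimal-length chain reaching y
  set S : Set ℕ := {n | ∃ c, Chn n c ∧ y ∈ c n} with hS
  have hSne : S.Nonempty := by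
    obtain ⟨n, c, hc, hyc⟩ := step1
    exact ⟨n, c, hc, hyc⟩
  obtain ⟨c, ⟨hn1, hmem, hxc, hcons⟩, hyc⟩ := Nat.sInf_mem hSne
  set n := sInf S with hn
  refine ⟨n, c, hn1, hmem, hxc, hyc, ?_⟩
  intro i j hi hin hj hjn
  constructor
  · intro hne
    by_contra habs
    have h2 : i + 1 < j ∨ j + 1 < i := by
      rcases abs_cases ((i : ℤ) - (j : ℤ)) with ⟨h, _⟩ | ⟨h, _⟩ <;> omega
    have hsh : ∃ (m : ℕ) (c' : ℕ → Set M), m < n ∧ 1 ≤ m ∧ (∀ k, 1 ≤ k → k ≤ m → c' k ∈ 𝒢) ∧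
        x ∈ c' 1 ∧ c' m = c n ∧ ∀ k, 1 ≤ k → k < m → (c' k ∩ c' (k+1)).Nonempty := by
      rcases h2 with h | h
      · exact stmt17_shorten 𝒢 x n c hmem hxc hcons i j hi hjn h hne
      · exact stmt17_shorten 𝒢 x n c hmem hxc hcons j i hj hin h
          (by obtain ⟨z, hz1, hz2⟩ := hne; exact ⟨z, hz2, hz1⟩)
    obtain ⟨m, c', hmn, hm1, hmem', hxc', hend, hcons'⟩ := hsh
    have hmS : m ∈ S := ⟨c', ⟨hm1, hmem', hxc', hcons'⟩, by rw [hend]; exact hyc⟩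
    exact absurd (Nat.sInf_le hmS) (by omega)
  · intro habs
    have h3 : i = j ∨ i + 1 = j ∨ j + 1 = i := by
      rcases abs_cases ((i : ℤ) - (j : ℤ)) with ⟨h, _⟩ | ⟨h, _⟩ <;> omega
    rcases h3 with h | h | h
    · subst h
      rcases lt_or_ge i n with h | h
      · obtain ⟨z, hz1, _⟩ := hcons i hi h
        exact ⟨z, hz1, hz1⟩
      · have hin' : i = n := by omega
        rcases eq_or_lt_of_le hn1 with h1 | h1
        · have h2 : i = 1 := by omega
          rw [h2]
          exact ⟨x, hxc, hxc⟩
        · obtain ⟨z, _, hz2⟩ := hcons (i - 1) (by omega) (by omega)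
          have e : i - 1 + 1 = i := by omega
          rw [e] at hz2
          exact ⟨z, hz2, hz2⟩
    · rw [← h]
      exact hcons i hi (by omega)
    · rw [← h]
      obtain ⟨z, hz1, hz2⟩ := hcons j hj (by omega)
      exact ⟨z, hz2, hz1⟩
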